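/- Let n be a positive integer and let Σ, S, Y be positive definite real n×n matrices such that Σ − S is positive definite. Then trace(S⁻¹·Y·S⁻¹·Y) > trace(Σ⁻¹·Y·Σ⁻¹·Y). -/

import Mathlib

open Matrix

variable {n : ℕ}


lemma myconj {A B : Matrix (Fin n) (Fin n) ℝ} (hA : A.PosDef) (hB : IsUnit B) :
    (B * A * Bᴴ).PosDef := by
  refine PosDef.of_dotProduct_mulVec_pos (isHermitian_mul_mul_conjTranspose B hA.1) fun x hx => ?_
  have hne : Bᴴ *ᵥ x ≠ 0 := by
    have : Function.Injective (Bᴴ.mulVec) :=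
      Matrix.mulVec_injective_iff_isUnit.mpr ((Matrix.isUnit_conjTranspose B).mpr hB)
    intro h
    exact hx (this (by simpa using h))
  simpa only [star_mulVec, dotProduct_mulVec, vecMul_vecMul, Matrix.mul_assoc, conjTranspose_conjTranspose] using
    hA.dotProduct_mulVec_pos hne

lemma mytrace_pos [NeZero n] {P : Matrix (Fin n) (Fin n) ℝ} (hP : P.PosDef) :
    0 < P.trace := by
  rw [Matrix.trace]
  refine Finset.sum_pos (fun i _ => ?_) Finset.univ_nonempty
  have := hP.dotProduct_mulVec_pos (x := Pi.single i 1) (by intro h; simpa using congrFun h i)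
  simpa [Matrix.diag, dotProduct, Pi.single_apply, mulVec, Finset.sum_ite_eq] using this

open scoped MatrixOrder in
lemma mytrace_mul_pos [NeZero n] {P Q : Matrix (Fin n) (Fin n) ℝ}
    (hP : P.PosDef) (hQ : Q.PosDef) : 0 < (P * Q).trace := by
  set R := CFC.sqrt P with hRdef
  have hRR : R * R = P := CFC.sqrt_mul_sqrt_self P hP.posSemidef.nonneg
  have hRpsd : R.PosSemidef := nonneg_iff_posSemidef.mp (CFC.sqrt_nonneg P)
  have hRunit : IsUnit R := by
    have hdet : R.det * R.det = P.det := by rw [← det_mul, hRR]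
    have : R.det ≠ 0 := by
      intro h
      rw [h, mul_zero] at hdet
      exact hP.det_pos.ne (hdet)
    exact (Matrix.isUnit_iff_isUnit_det R).mpr this.isUnit
  have key : (P * Q).trace = (R * Q * Rᴴ).trace := by
    rw [hRpsd.1, ← hRR, Matrix.mul_assoc, Matrix.mul_assoc, trace_mul_comm,
      ← Matrix.mul_assoc]
  rw [key]
  exact mytrace_pos (myconj hQ hRunit)

lemma myinv_sub {Sig S : Matrix (Fin n) (Fin n) ℝ} (hSig : Sig.PosDef) (hS : S.PosDef)
    (hdiff : (Sig - S).PosDef) : (S⁻¹ - Sig⁻¹).PosDef := by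
  letI := hS.isUnit.invertible
  letI := hSig.isUnit.invertible
  set D := Sig - S with hD
  have key : S⁻¹ - Sig⁻¹ = Sig⁻¹ * D * Sig⁻¹ + (Sig⁻¹ * D) * S⁻¹ * (D * Sig⁻¹) := by
    have h1 : Sig * Sig⁻¹ = 1 := Matrix.mul_inv_of_invertible Sig
    have h2 : Sig⁻¹ * Sig = 1 := Matrix.inv_mul_of_invertible Sig
    have h3 : S * S⁻¹ = 1 := Matrix.mul_inv_of_invertible S
    have h4 : S⁻¹ * S = 1 := Matrix.inv_mul_of_invertible S
    rw [hD]
    simp only [Matrix.mul_sub, Matrix.sub_mul, Matrix.mul_assoc,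
      Matrix.mul_inv_cancel_left_of_invertible, Matrix.inv_mul_cancel_left_of_invertible,
      Matrix.mul_inv_cancel_right_of_invertible, Matrix.inv_mul_cancel_right_of_invertible,
      h1, h2, h3, h4, Matrix.mul_one, Matrix.one_mul]
    abel
  rw [key]
  have hSiginv : (Sig⁻¹)ᴴ = Sig⁻¹ := hSig.inv.1
  have hDh : Dᴴ = D := hdiff.1
  have t1 : (Sig⁻¹ * D * Sig⁻¹).PosDef := by
    have := myconj hdiff (hSig.inv.isUnit)
    rwa [hSiginv] at this
  have t2 : ((Sig⁻¹ * D) * S⁻¹ * (D * Sig⁻¹)).PosDef := by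
    have hu : IsUnit (Sig⁻¹ * D) := (hSig.inv.isUnit).mul hdiff.isUnit
    have := myconj hS.inv hu
    rwa [conjTranspose_mul, hSiginv, hDh] at this
  exact t1.add t2


/-- For positive definite real `n×n` matrices `Sig, S, Y` with `Sig - S`
positive definite, `trace (S⁻¹·Y·S⁻¹·Y) > trace (Sig⁻¹·Y·Sig⁻¹·Y)`. -/
theorem statement8 (n : ℕ) (hn : 0 < n) (Sig S Y : Matrix (Fin n) (Fin n) ℝ)
    (hSig : Sig.PosDef) (hS : S.PosDef) (hY : Y.PosDef) (hdiff : (Sig - S).PosDef) :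
    (Sig⁻¹ * Y * Sig⁻¹ * Y).trace < (S⁻¹ * Y * S⁻¹ * Y).trace := by
  haveI : NeZero n := ⟨hn.ne'⟩
  set A := Sig⁻¹ with hA
  set E := S⁻¹ - Sig⁻¹ with hE
  have hEpd : E.PosDef := myinv_sub hSig hS hdiff
  have hBeq : S⁻¹ = A + E := by rw [hA, hE]; abel
  have hYh : Yᴴ = Y := hY.1
  have expand : S⁻¹ * Y * S⁻¹ * Y =
      A * Y * A * Y + (E * (Y * A * Y) + (A * (Y * E * Y) + E * (Y * E * Y))) := by
    rw [hBeq]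
    noncomm_ring
  have hYAY : (Y * A * Y).PosDef := by
    have := myconj hSig.inv hY.isUnit
    rwa [hYh] at this
  have hYEY : (Y * E * Y).PosDef := by
    have := myconj hEpd hY.isUnit
    rwa [hYh] at this
  have p1 : 0 < (E * (Y * A * Y)).trace := mytrace_mul_pos hEpd hYAY
  have p2 : 0 < (A * (Y * E * Y)).trace := mytrace_mul_pos hSig.inv hYEY
  have p3 : 0 < (E * (Y * E * Y)).trace := by
    have : E * (Y * E * Y) = E * Y * E * Y := by noncomm_ring
    rw [this]
    have h2 : E * Y * E * Y = E * (Y * E * Y) := by noncomm_ring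
    rw [h2]; exact mytrace_mul_pos hEpd hYEY
  rw [expand, trace_add, trace_add, trace_add]
  linarith
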